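/- For a square matrix A of index 1, the Drazin inverse is given by the limit A_D^{-1} = lim_{z→0⁻} (A² - zI)^{-1} A, equivalently lim_{a→∞} a(I + aA²)^{-1} A. -/

import Mathlib

open Filter Topology

section DrazinAux

open Matrix

lemma drazin_key {n : ℕ} (A X : Matrix (Fin n) (Fin n) ℂ)
    (h1 : X * A * X = X) (h2 : A * X = X * A) (h3 : A ^ 2 * X = A)
    (z : ℂ) (hz : z ≠ 0) (hU : IsUnit (1 - z • X ^ 2).det) :
    (A ^ 2 - z • 1) * ((1 - z • X ^ 2)⁻¹ * (X ^ 2 * (A * X)) - z⁻¹ • (1 - A * X)) = 1 ∧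
    ((1 - z • X ^ 2)⁻¹ * (X ^ 2 * (A * X)) - z⁻¹ • (1 - A * X)) * A
      = (1 - z • X ^ 2)⁻¹ * X := by
  have hsq : A ^ 2 = A * A := sq A
  have hXA : X * (A * X) = X := by rw [← mul_assoc, h1]
  have hPA : (A * X) * A = A := by
    rw [mul_assoc, ← h2, ← mul_assoc, ← hsq, h3]
  have hX2A : X ^ 2 * A = X := by
    rw [sq, mul_assoc, ← h2, hXA]
  have hAX2 : A * X ^ 2 = X ^ 2 * A := by
    rw [sq, ← mul_assoc, h2, mul_assoc, h2, ← mul_assoc, ← sq]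
  have hA2X2 : A ^ 2 * X ^ 2 = A * X := by
    rw [sq X, ← mul_assoc, h3]
  have hX2P : X ^ 2 * (A * X) = X ^ 2 := by
    rw [sq, mul_assoc, hXA, ← sq]
  have hA2P : A ^ 2 * (A * X) = A ^ 2 := by
    rw [← mul_assoc, hsq, mul_assoc, h2, ← mul_assoc, ← hsq, h3, ← hsq]
  have hcommU : (A ^ 2 - z • 1) * (1 - z • X ^ 2) = (1 - z • X ^ 2) * (A ^ 2 - z • 1) := by
    have : A ^ 2 * X ^ 2 = X ^ 2 * A ^ 2 := by
      rw [hsq, mul_assoc, hAX2, ← mul_assoc, hAX2, mul_assoc, ← hsq]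
    simp only [mul_sub, sub_mul, mul_one, one_mul, mul_smul_comm, smul_mul_assoc, this]
    module
  have hUl := Matrix.nonsing_inv_mul _ hU
  have hUr := Matrix.mul_nonsing_inv _ hU
  have hcomm : (A ^ 2 - z • 1) * (1 - z • X ^ 2)⁻¹
      = (1 - z • X ^ 2)⁻¹ * (A ^ 2 - z • 1) := by
    calc (A ^ 2 - z • 1) * (1 - z • X ^ 2)⁻¹
        = ((1 - z • X ^ 2)⁻¹ * (1 - z • X ^ 2)) * ((A ^ 2 - z • 1) * (1 - z • X ^ 2)⁻¹) := by
          rw [hUl, one_mul]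
      _ = (1 - z • X ^ 2)⁻¹ * (((A ^ 2 - z • 1) * (1 - z • X ^ 2)) * (1 - z • X ^ 2)⁻¹) := by
          rw [hcommU]; noncomm_ring
      _ = (1 - z • X ^ 2)⁻¹ * (A ^ 2 - z • 1) := by
          rw [mul_assoc, hUr, mul_one]
  have e1 : (A ^ 2 - z • 1) * ((1 - z • X ^ 2)⁻¹ * (X ^ 2 * (A * X))) = A * X := by
    rw [← mul_assoc, hcomm, mul_assoc]
    have : (A ^ 2 - z • 1) * (X ^ 2 * (A * X)) = (1 - z • X ^ 2) * (A * X) := by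
      rw [hX2P]
      simp only [sub_mul, one_mul, smul_mul_assoc, one_mul]
      rw [hA2X2, hX2P]
    rw [this, ← mul_assoc, hUl, one_mul]
  have e2 : (A ^ 2 - z • 1) * (z⁻¹ • (1 - A * X)) = -(1 - A * X) := by
    rw [mul_smul_comm]
    have : (A ^ 2 - z • 1) * (1 - A * X) = -(z • (1 - A * X)) := by
      simp only [sub_mul, mul_sub, mul_one, one_mul, smul_mul_assoc, smul_sub, hA2P]
      abel
    rw [this, smul_neg, smul_smul, inv_mul_cancel₀ hz, one_smul]
  constructor
  · rw [mul_sub, e1, e2, sub_neg_eq_add]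
    abel
  · simp only [sub_mul, smul_mul_assoc, mul_assoc, hPA, hX2P, hX2A]
    simp [sub_mul, one_mul]

lemma drazin_ev {n : ℕ} (X : Matrix (Fin n) (Fin n) ℂ) :
    ∀ᶠ w in 𝓝 (0 : ℂ), IsUnit (1 - w • X ^ 2).det := by
  have hc : Continuous fun w : ℂ => (1 - w • X ^ 2).det :=
    (continuous_const.sub (continuous_id.smul continuous_const)).matrix_det
  have h0 : (fun w : ℂ => (1 - w • X ^ 2).det) 0 ≠ 0 := by simp
  filter_upwards [hc.continuousAt.eventually_ne h0] with w hw
  exact isUnit_iff_ne_zero.mpr hw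

lemma drazin_gtend {n : ℕ} (X : Matrix (Fin n) (Fin n) ℂ) :
    Tendsto (fun w : ℂ => (1 - w • X ^ 2)⁻¹ * X) (𝓝 0) (𝓝 X) := by
  have haff : ContinuousAt (fun w : ℂ => 1 - w • X ^ 2) 0 :=
    (continuous_const.sub (continuous_id.smul continuous_const)).continuousAt
  have hinv : ContinuousAt Inv.inv ((fun w : ℂ => 1 - w • X ^ 2) 0) := by
    apply continuousAt_matrix_inv
    simp only [zero_smul, sub_zero, det_one]
    rw [Ring.inverse_eq_inv']
    exact continuousAt_inv₀ one_ne_zero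
  have hcomp : Tendsto (fun w : ℂ => (1 - w • X ^ 2)⁻¹) (𝓝 0) (𝓝 1) := by
    have := Tendsto.comp hinv haff
    simpa [Function.comp_def] using this
  have := hcomp.mul (tendsto_const_nhds : Tendsto (fun _ : ℂ => X) (𝓝 0) (𝓝 X))
  simpa using this

end DrazinAux

/-- For a square matrix `A` of index 1 (`rank A = rank A²`), the Drazin inverse
is given by the limit `A_D⁻¹ = lim_{z→0⁻} (A² - z•1)⁻¹ * A`, equivalently
`lim_{a→∞} a • ((1 + a•A²)⁻¹ * A)`. -/
theorem drazin_inverse_limit_of_index_one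
    (n : ℕ) (A : Matrix (Fin n) (Fin n) ℂ)
    (hind : A.rank = (A ^ 2).rank)
    (X : Matrix (Fin n) (Fin n) ℂ)
    (h1 : X * A * X = X) (h2 : A * X = X * A) (h3 : A ^ 2 * X = A) :
    Tendsto (fun z : ℝ => (A ^ 2 - (z : ℂ) • 1)⁻¹ * A)
        (nhdsWithin 0 (Set.Iio 0)) (nhds X) ∧
      Tendsto (fun a : ℝ => (a : ℂ) • ((1 + (a : ℂ) • A ^ 2)⁻¹ * A))
        atTop (nhds X) := by
  constructor
  · -- limit from the left at 0
    have htend : Tendsto (fun z : ℝ => (z : ℂ)) (𝓝[<] (0 : ℝ)) (𝓝 0) := by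
      have := (Complex.continuous_ofReal.tendsto 0).mono_left
        (nhdsWithin_le_nhds (s := Set.Iio (0 : ℝ)))
      simpa using this
    have hev : ∀ᶠ z : ℝ in 𝓝[<] (0 : ℝ), IsUnit (1 - (z : ℂ) • X ^ 2).det :=
      htend.eventually (drazin_ev X)
    have heq : ∀ᶠ z : ℝ in 𝓝[<] (0 : ℝ),
        (fun w : ℂ => (1 - w • X ^ 2)⁻¹ * X) ((z : ℂ))
          = (A ^ 2 - (z : ℂ) • 1)⁻¹ * A := by
      filter_upwards [hev, self_mem_nhdsWithin] with z hUz hz0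
      have hz : (z : ℂ) ≠ 0 := by
        simpa using (ne_of_lt (hz0 : z < 0))
      obtain ⟨k1, k2⟩ := drazin_key A X h1 h2 h3 (z : ℂ) hz hUz
      rw [Matrix.inv_eq_right_inv k1, k2]
    exact Tendsto.congr' heq ((drazin_gtend X).comp htend)
  · -- limit at infinity
    have htend : Tendsto (fun a : ℝ => -((a : ℂ))⁻¹) atTop (𝓝 0) := by
      have h1' : Tendsto (fun a : ℝ => ((a : ℂ))⁻¹) atTop (𝓝 0) := by
        have := (Complex.continuous_ofReal.tendsto 0).comp tendsto_inv_atTop_zero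
        simpa [Function.comp_def, Complex.ofReal_inv] using this
      simpa using h1'.neg
    have hev : ∀ᶠ a : ℝ in atTop, IsUnit (1 - (-((a : ℂ))⁻¹) • X ^ 2).det :=
      htend.eventually (drazin_ev X)
    have heq : ∀ᶠ a : ℝ in atTop,
        (fun w : ℂ => (1 - w • X ^ 2)⁻¹ * X) (-((a : ℂ))⁻¹)
          = (a : ℂ) • ((1 + (a : ℂ) • A ^ 2)⁻¹ * A) := by
      filter_upwards [hev, eventually_gt_atTop (0 : ℝ)] with a hUa ha0
      have hc : (a : ℂ) ≠ 0 := by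
        simpa using (ne_of_gt ha0)
      have hz : -((a : ℂ))⁻¹ ≠ 0 := by
        simpa using inv_ne_zero hc
      obtain ⟨k1, k2⟩ := drazin_key A X h1 h2 h3 (-((a : ℂ))⁻¹) hz hUa
      set B := (1 - (-((a : ℂ))⁻¹) • X ^ 2)⁻¹ * (X ^ 2 * (A * X))
          - (-((a : ℂ))⁻¹)⁻¹ • (1 - A * X) with hB
      have hfact : 1 + (a : ℂ) • A ^ 2 = (a : ℂ) • (A ^ 2 - (-((a : ℂ))⁻¹) • 1) := by
        rw [smul_sub, smul_smul]
        rw [mul_neg, mul_inv_cancel₀ hc]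
        simp [add_comm]
      have hright : (1 + (a : ℂ) • A ^ 2) * ((a : ℂ)⁻¹ • B) = 1 := by
        rw [hfact, smul_mul_assoc, mul_smul_comm, smul_smul,
          mul_inv_cancel₀ hc, one_smul, k1]
      rw [Matrix.inv_eq_right_inv hright]
      rw [smul_mul_assoc, smul_smul, mul_inv_cancel₀ hc, one_smul, k2]
    exact Tendsto.congr' heq ((drazin_gtend X).comp htend)
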